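/- arXiv:1804.02534 — 3 statements merged into one kernel-verified Lean document; each statement's English description precedes it below -/
import Mathlib

section
/- Let I be a set, E an equivalence relation on I, n : I → ℕ positive, and suppose m : E → ℕ satisfies the index conditions. Fix a prime p and a natural number k, and define x ∼ y iff x = y, or (x,y) ∈ E and p^k divides m(x,y). Then ∼ is an equivalence relation on I. -/
theorem stmt_8 {I : Type*} (E : I → I → Prop) (hE : Equivalence E)
    (n : I → ℕ) (hn : ∀ x, 0 < n x)
    (m : I → I → ℕ) (hm : ∀ x y, E x y → 0 < m x y)
    (idx1 : ∀ x y, E x y → m x y ∣ n x ∧ m x y ∣ n y)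
    (idx2 : ∀ x, m x x = n x)
    (idx3 : ∀ x y, E x y → m y x = m x y)
    (idx4 : ∀ x y z, E x y → E y z →
      Nat.gcd (m x y) (m y z) = Nat.gcd (m x y) (m x z) ∧
      Nat.gcd (m x y) (m x z) = Nat.gcd (m x z) (m y z))
    (p : ℕ) (hp : p.Prime) (k : ℕ) :
    Equivalence (fun x y => x = y ∨ (E x y ∧ p ^ k ∣ m x y)) := by
  constructor
  · intro x; exact Or.inl rfl
  · rintro x y (rfl | ⟨hxy, hd⟩)
    · exact Or.inl rfl
    · exact Or.inr ⟨hE.symm hxy, (idx3 x y hxy) ▸ hd⟩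
  · rintro x y z (rfl | ⟨hxy, hdxy⟩) h2
    · exact h2
    · rcases h2 with rfl | ⟨hyz, hdyz⟩
      · exact Or.inr ⟨hxy, hdxy⟩
      · refine Or.inr ⟨hE.trans hxy hyz, ?_⟩
        have h := (idx4 x y z hxy hyz).1
        have : p ^ k ∣ Nat.gcd (m x y) (m y z) := Nat.dvd_gcd hdxy hdyz
        rw [h] at this
        exact this.trans (Nat.gcd_dvd_right _ _)
end

section
/- In a relation algebra, if x, y, z are subidentity elements and b ≤ y;1;z, then (x;1;y);b ≤ x;1;z. -/
/-- A relation algebra: a Boolean algebra with relative multiplication `comp`,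
converse `conv`, and identity element `one'`, satisfying Tarski's axioms. -/
class RelationAlgebra (α : Type*) extends BooleanAlgebra α where
  comp : α → α → α
  conv : α → α
  one' : α
  comp_assoc : ∀ a b c : α, comp (comp a b) c = comp a (comp b c)
  comp_one' : ∀ a : α, comp a one' = a
  conv_conv : ∀ a : α, conv (conv a) = a
  comp_sup : ∀ a b c : α, comp (a ⊔ b) c = comp a c ⊔ comp b c
  conv_sup : ∀ a b : α, conv (a ⊔ b) = conv a ⊔ conv b
  conv_comp : ∀ a b : α, conv (comp a b) = comp (conv b) (conv a)
  tarski : ∀ a b : α, comp (conv a) (comp a b)ᶜ ≤ bᶜ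

open RelationAlgebra

section Aux
variable {α : Type*} [RelationAlgebra α]

lemma ra_conv_mono {a b : α} (h : a ≤ b) : conv a ≤ conv b := by
  have : conv a ⊔ conv b = conv b := by rw [← conv_sup, sup_eq_right.mpr h]
  exact le_of_sup_eq this

lemma ra_comp_mono_left {a b : α} (c : α) (h : a ≤ b) : comp a c ≤ comp b c := by
  have : comp a c ⊔ comp b c = comp b c := by rw [← comp_sup, sup_eq_right.mpr h]
  exact le_of_sup_eq this

lemma ra_comp_mono_right {a b : α} (c : α) (h : a ≤ b) : comp c a ≤ comp c b := by
  have h2 : conv (comp c a) ≤ conv (comp c b) := by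
    rw [conv_comp, conv_comp]
    exact ra_comp_mono_left _ (ra_conv_mono h)
  have := ra_conv_mono h2
  rwa [conv_conv, conv_conv] at this

lemma ra_comp_mono {a b c d : α} (h1 : a ≤ b) (h2 : c ≤ d) : comp a c ≤ comp b d :=
  le_trans (ra_comp_mono_left c h1) (ra_comp_mono_right b h2)

end Aux

theorem stmt_12 {α : Type*} [RelationAlgebra α] (x y z b : α)
    (hx : x ≤ one') (hy : y ≤ one') (hz : z ≤ one')
    (hb : b ≤ comp (comp y ⊤) z) :
    comp (comp (comp x ⊤) y) b ≤ comp (comp x ⊤) z := by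
  have step1 : comp (comp (comp x ⊤) y) b ≤ comp (comp x ⊤) (comp (comp y ⊤) z) := by
    calc comp (comp (comp x ⊤) y) b
        ≤ comp (comp (comp x ⊤) one') (comp (comp y ⊤) z) := ra_comp_mono (ra_comp_mono_right _ hy) hb
      _ = comp (comp x ⊤) (comp (comp y ⊤) z) := by rw [comp_one']
  refine step1.trans ?_
  calc comp (comp x ⊤) (comp (comp y ⊤) z)
      ≤ comp (comp x ⊤) (comp ⊤ z) := ra_comp_mono_right _ (ra_comp_mono_left _ le_top)
    _ = comp (comp (comp x ⊤) ⊤) z := by simp only [comp_assoc]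
    _ = comp (comp x (comp ⊤ ⊤)) z := by simp only [comp_assoc]
    _ ≤ comp (comp x ⊤) z := ra_comp_mono_left _ (ra_comp_mono_right _ le_top)
end

section
/- In a relation algebra, for any subidentity atom x, the element x ; 0' ; x ; 0' ; x is below the identity if and only if x ; 0' ; x is a functional element, where 0' denotes the complement of the identity element. -/
open RelationAlgebra

section Lemmas

variable {α : Type*} [RelationAlgebra α]

lemma ra_conv_inj {a b : α} (h : conv a = conv b) : a = b := by
  have := congrArg conv h
  rwa [conv_conv, conv_conv] at this

lemma ra_comp_sup_right (a b c : α) :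
    comp a (b ⊔ c) = comp a b ⊔ comp a c := by
  apply ra_conv_inj
  rw [conv_comp, conv_sup, conv_sup, comp_sup, conv_comp, conv_comp]

lemma ra_one_comp' (a : α) : comp (conv one') a = a := by
  calc comp (conv one') a = comp (conv one') (conv (conv a)) := by rw [conv_conv]
    _ = conv (comp (conv a) one') := by rw [conv_comp]
    _ = a := by rw [comp_one', conv_conv]

lemma ra_conv_one : conv (one' : α) = one' := by
  calc (conv one' : α) = comp (conv one') one' := (comp_one' _).symm
    _ = one' := ra_one_comp' _

lemma ra_one_comp (a : α) : comp one' a = a := by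
  rw [← ra_conv_one, ra_one_comp']

lemma ra_conv_bot : conv (⊥ : α) = ⊥ := by
  have h1 : (⊥ : α) ≤ conv ⊥ := bot_le
  have h2 : conv (⊥:α) ≤ ⊥ := by
    have := ra_conv_mono h1
    rwa [conv_conv] at this
  exact le_antisymm h2 h1

lemma ra_conv_top : conv (⊤ : α) = ⊤ := by
  have h1 : conv (⊤ : α) ≤ ⊤ := le_top
  have h2 : (⊤ : α) ≤ conv ⊤ := by
    have := ra_conv_mono h1
    rwa [conv_conv] at this
  exact le_antisymm h1 h2

lemma ra_conv_inf (a b : α) : conv (a ⊓ b) = conv a ⊓ conv b := by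
  apply le_antisymm
  · exact le_inf (ra_conv_mono inf_le_left) (ra_conv_mono inf_le_right)
  · have h1 : conv (conv a ⊓ conv b) ≤ a := by
      have := ra_conv_mono (inf_le_left (a := conv a) (b := conv b))
      rwa [conv_conv] at this
    have h2 : conv (conv a ⊓ conv b) ≤ b := by
      have := ra_conv_mono (inf_le_right (a := conv a) (b := conv b))
      rwa [conv_conv] at this
    have := ra_conv_mono (le_inf h1 h2)
    rwa [conv_conv] at this

lemma ra_conv_compl (a : α) : conv (aᶜ) = (conv a)ᶜ := by
  symm
  apply compl_unique
  · rw [← ra_conv_inf, inf_compl_eq_bot, ra_conv_bot]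
  · rw [← conv_sup, sup_compl_eq_top, ra_conv_top]

/-- Schröder rule. -/
lemma ra_schroeder {a b c : α} (h : comp a b ⊓ c = ⊥) :
    comp (conv a) c ⊓ b = ⊥ := by
  have hc : c ≤ (comp a b)ᶜ := by
    rw [inf_comm] at h
    exact (le_compl_iff_disjoint_right).mpr (disjoint_iff.mpr h)
  have : comp (conv a) c ≤ bᶜ :=
    (ra_comp_mono (le_refl (conv a)) hc).trans (tarski a b)
  rw [inf_comm]
  exact disjoint_iff.mp ((le_compl_iff_disjoint_right).mp this).symm

lemma ra_schroeder' {a b c : α} (h : comp (conv a) c ⊓ b = ⊥) :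
    comp a b ⊓ c = ⊥ := by
  have := ra_schroeder (a := conv a) (b := c) (c := b) h
  rwa [conv_conv] at this

/-- Dedekind / modular law. -/
lemma ra_dedekind (a b c : α) :
    comp a b ⊓ c ≤ comp a (b ⊓ comp (conv a) c) := by
  set e := comp (conv a) c with he
  have hb : b = (b ⊓ e) ⊔ (b ⊓ eᶜ) := by
    rw [← inf_sup_left, sup_compl_eq_top, inf_top_eq]
  have hdisj : comp a (b ⊓ eᶜ) ⊓ c = ⊥ := by
    apply ra_schroeder'
    rw [he]
    have : comp (conv a) c ⊓ (b ⊓ (comp (conv a) c)ᶜ) ≤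
        comp (conv a) c ⊓ (comp (conv a) c)ᶜ :=
      inf_le_inf_left _ inf_le_right
    rw [inf_compl_eq_bot] at this
    exact le_bot_iff.mp this
  calc comp a b ⊓ c = comp a ((b ⊓ e) ⊔ (b ⊓ eᶜ)) ⊓ c := by rw [← hb]
    _ = (comp a (b ⊓ e) ⊓ c) ⊔ (comp a (b ⊓ eᶜ) ⊓ c) := by
        rw [ra_comp_sup_right, inf_sup_right]
    _ = (comp a (b ⊓ e) ⊓ c) ⊔ ⊥ := by rw [hdisj]
    _ ≤ comp a (b ⊓ e) := by rw [sup_bot_eq]; exact inf_le_left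

lemma ra_subid_conv {x : α} (hx : x ≤ one') : conv x = x := by
  have hx2 : conv x ≤ one' := by
    have := ra_conv_mono hx
    rwa [ra_conv_one] at this
  have key : ∀ y : α, y ≤ one' → conv y ≤ y := by
    intro y hy
    have hy2 : conv y ≤ one' := by
      have := ra_conv_mono hy
      rwa [ra_conv_one] at this
    have h2 : conv y ≤ comp (conv y) (one' ⊓ comp (conv (conv y)) one') := by
      calc conv y = comp (conv y) one' ⊓ one' := by
              rw [comp_one', inf_eq_left.mpr hy2]
        _ ≤ _ := ra_dedekind _ _ _
    rw [conv_conv, comp_one'] at h2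
    have h3 : one' ⊓ y = y := inf_eq_right.mpr hy
    rw [h3] at h2
    calc conv y ≤ comp (conv y) y := h2
      _ ≤ comp one' y := ra_comp_mono hy2 (le_refl y)
      _ = y := ra_one_comp y
  have h1 : conv x ≤ x := key x hx
  have h2 : conv (conv x) ≤ conv x := key (conv x) hx2
  rw [conv_conv] at h2
  exact le_antisymm h1 h2

lemma ra_subid_comp_self {x : α} (hx : x ≤ one') : comp x x = x := by
  apply le_antisymm
  · calc comp x x ≤ comp x one' := ra_comp_mono (le_refl x) hx
      _ = x := comp_one' x
  · have h2 : x ≤ comp x (one' ⊓ comp (conv x) x) := by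
      calc x = comp x one' ⊓ x := by rw [comp_one', inf_idem]
        _ ≤ _ := ra_dedekind x one' x
    have h3 : one' ⊓ comp (conv x) x ≤ x := by
      rw [ra_subid_conv hx]
      calc one' ⊓ comp x x ≤ comp x x := inf_le_right
        _ ≤ comp x one' := ra_comp_mono (le_refl x) hx
        _ = x := comp_one' x
    calc x ≤ comp x (one' ⊓ comp (conv x) x) := h2
      _ ≤ comp x x := ra_comp_mono (le_refl x) h3

end Lemmas

theorem stmt_15 {α : Type*} [RelationAlgebra α] (x : α)
    (hx : IsAtom x) (hx' : x ≤ one') :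
    comp (comp (comp (comp x (one'ᶜ)) x) (one'ᶜ)) x ≤ one' ↔
      comp (conv (comp (comp x (one'ᶜ)) x)) (comp (comp x (one'ᶜ)) x) ≤ one' := by
  have hconv : conv (comp (comp x (one'ᶜ)) x) = comp (comp x (one'ᶜ)) x := by
    rw [conv_comp, conv_comp, ra_conv_compl, ra_conv_one, ra_subid_conv hx',
      comp_assoc]
  have hxx : comp x x = x := ra_subid_comp_self hx'
  have heq : comp (conv (comp (comp x (one'ᶜ)) x)) (comp (comp x (one'ᶜ)) x) =
      comp (comp (comp (comp x (one'ᶜ)) x) (one'ᶜ)) x := by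
    rw [hconv]
    simp only [comp_assoc]
    rw [← comp_assoc x x, hxx]
  rw [heq]
end
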